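/- For a positive integer n and nonnegative integers r, s, m, the integral over [0,∞)^{n+1} of ∏_{i=1}^n (t_0+t_1+⋯+t_{i−1})^r (t_i+t_{i+1}+⋯+t_n)^s · ∏_{1≤i<j≤n} (t_i+t_{i+1}+⋯+t_{j−1})^m · e^{−t_0−t_1−⋯−t_n} with respect to dt_0 dt_1 ⋯ dt_n equals (((r+s+1)n + m·n(n−1)/2)! / n!) times the integral over [0,1]^n of ∏_{i=1}^n x_i^r (1−x_i)^s · ∏_{1≤i<j≤n} |x_i − x_j|^m with respect to dx_1 ⋯ dx_n. -/

import Mathlib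

open MeasureTheory Finset

section SelbergAux
variable {n : ℕ}

variable {n r s m : ℕ}

/-- The right-hand side integrand. -/
def Fint (r s m : ℕ) (x : Fin n → ℝ) : ℝ :=
  (∏ i, x i ^ r * (1 - x i) ^ s) *
    ∏ p ∈ Finset.univ.filter (fun p : Fin n × Fin n => p.1 < p.2), |x p.1 - x p.2| ^ m

def Gpair (x : Fin n → ℝ) : ℝ :=
  ∏ p ∈ Finset.univ.filter (fun p : Fin n × Fin n => p.1 < p.2), |x p.1 - x p.2|

def Goff (x : Fin n → ℝ) : ℝ :=
  ∏ p ∈ Finset.univ.filter (fun p : Fin n × Fin n => p.1 ≠ p.2), |x p.1 - x p.2|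

lemma Gpair_nonneg (x : Fin n → ℝ) : 0 ≤ Gpair x :=
  Finset.prod_nonneg fun _ _ => abs_nonneg _

lemma Goff_eq_sq (x : Fin n → ℝ) : Goff x = Gpair x ^ 2 := by
  classical
  have hsplit : (Finset.univ.filter (fun p : Fin n × Fin n => p.1 ≠ p.2)) =
      (Finset.univ.filter (fun p : Fin n × Fin n => p.1 < p.2)) ∪
      (Finset.univ.filter (fun p : Fin n × Fin n => p.2 < p.1)) := by
    ext p
    simp only [Finset.mem_filter, Finset.mem_univ, true_and, Finset.mem_union]
    exact ne_iff_lt_or_gt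
  have hdisj : Disjoint (Finset.univ.filter (fun p : Fin n × Fin n => p.1 < p.2))
      (Finset.univ.filter (fun p : Fin n × Fin n => p.2 < p.1)) := by
    rw [Finset.disjoint_filter]
    intro p _ h1 h2
    exact absurd h1 (not_lt_of_gt h2)
  rw [Goff, hsplit, Finset.prod_union hdisj]
  have : ∏ p ∈ Finset.univ.filter (fun p : Fin n × Fin n => p.2 < p.1), |x p.1 - x p.2|
      = Gpair x := by
    rw [Gpair]
    refine Finset.prod_nbij' (fun p => (p.2, p.1)) (fun p => (p.2, p.1)) ?_ ?_ ?_ ?_ ?_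
    · intro p hp; simp only [Finset.mem_filter, Finset.mem_univ, true_and] at hp ⊢; exact hp
    · intro p hp; simp only [Finset.mem_filter, Finset.mem_univ, true_and] at hp ⊢; exact hp
    · intro p _; rfl
    · intro p _; rfl
    · intro p _; rw [abs_sub_comm]
  rw [this, Gpair, sq]

lemma Goff_comp_perm (σ : Equiv.Perm (Fin n)) (x : Fin n → ℝ) : Goff (x ∘ σ) = Goff x := by
  classical
  rw [Goff, Goff]
  refine Finset.prod_nbij' (fun p => (σ p.1, σ p.2)) (fun p => (σ.symm p.1, σ.symm p.2))
    ?_ ?_ ?_ ?_ ?_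
  · intro p hp
    simp only [Finset.mem_filter, Finset.mem_univ, true_and] at hp ⊢
    exact fun h => hp (σ.injective h)
  · intro p hp
    simp only [Finset.mem_filter, Finset.mem_univ, true_and] at hp ⊢
    exact fun h => hp (σ.symm.injective h)
  · intro p _; simp
  · intro p _; simp
  · intro p _; rfl

lemma Gpair_comp_perm (σ : Equiv.Perm (Fin n)) (x : Fin n → ℝ) : Gpair (x ∘ σ) = Gpair x := by
  have h := Goff_comp_perm σ x
  rw [Goff_eq_sq, Goff_eq_sq] at h
  calc Gpair (x ∘ σ) = Real.sqrt (Gpair (x ∘ σ) ^ 2) := (Real.sqrt_sq (Gpair_nonneg _)).symm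
  _ = Real.sqrt (Gpair x ^ 2) := by rw [h]
  _ = Gpair x := Real.sqrt_sq (Gpair_nonneg _)

lemma Fint_pairs_pow (x : Fin n → ℝ) :
    ∏ p ∈ Finset.univ.filter (fun p : Fin n × Fin n => p.1 < p.2), |x p.1 - x p.2| ^ m
      = Gpair x ^ m := by
  rw [Gpair, ← Finset.prod_pow]

lemma Fint_comp_perm (σ : Equiv.Perm (Fin n)) (x : Fin n → ℝ) :
    Fint r s m (x ∘ σ) = Fint r s m x := by
  rw [Fint, Fint, Fint_pairs_pow, Fint_pairs_pow, Gpair_comp_perm]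
  congr 1
  exact Equiv.prod_comp σ fun i => x i ^ r * (1 - x i) ^ s

lemma Fint_continuous : Continuous (Fint r s m : (Fin n → ℝ) → ℝ) := by
  unfold Fint
  fun_prop

lemma Fint_nonneg_on {x : Fin n → ℝ} (hx : ∀ i, x i ∈ Set.Icc (0:ℝ) 1) : 0 ≤ Fint r s m x := by
  unfold Fint
  have := hx
  refine mul_nonneg (Finset.prod_nonneg fun i _ => mul_nonneg (pow_nonneg (hx i).1 _)
    (pow_nonneg (by linarith [(hx i).2]) _)) (Finset.prod_nonneg fun p _ => pow_nonneg (abs_nonneg _) _)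

variable {n : ℕ}

lemma null_eq_coords {i j : Fin n} (h : i ≠ j) : volume {x : Fin n → ℝ | x i = x j} = 0 := by
  set f : (Fin n → ℝ) →ₗ[ℝ] ℝ :=
    (LinearMap.proj i : (Fin n → ℝ) →ₗ[ℝ] ℝ) - (LinearMap.proj j : (Fin n → ℝ) →ₗ[ℝ] ℝ) with hf
  have hset : {x : Fin n → ℝ | x i = x j} = (LinearMap.ker f : Set _) := by
    ext x
    simp [hf, LinearMap.mem_ker, sub_eq_zero, eq_comm]
  rw [hset]
  refine Measure.addHaar_submodule _ _ ?_
  intro htop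
  have h1 : f (Pi.single i 1) = 0 := by
    have := Submodule.eq_top_iff'.mp htop (Pi.single i 1)
    simpa [LinearMap.mem_ker] using this
  rw [hf] at h1
  simp [Pi.single_apply, h.symm] at h1

lemma null_const_coord {i : Fin n} (c : ℝ) : volume {x : Fin n → ℝ | x i = c} = 0 := by
  rw [MeasureTheory.volume_pi]
  exact MeasureTheory.Measure.pi_hyperplane (fun _ => (volume : Measure ℝ)) i c

lemma measurableSet_strictMono_comp (σ : Equiv.Perm (Fin n)) :
    MeasurableSet {x : Fin n → ℝ | StrictMono (x ∘ σ)} := by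
  have hset : {x : Fin n → ℝ | StrictMono (x ∘ σ)} =
      ⋂ (p : Fin n × Fin n), ⋂ (_ : p.1 < p.2), {x : Fin n → ℝ | x (σ p.1) < x (σ p.2)} := by
    ext x
    simp only [Set.mem_setOf_eq, Set.mem_iInter]
    constructor
    · intro hx p hp; exact hx hp
    · intro hx a b hab; exact hx (a, b) hab
  rw [hset]
  refine MeasurableSet.iInter fun p => MeasurableSet.iInter fun _ => ?_
  exact measurableSet_lt (measurable_pi_apply _) (measurable_pi_apply _)

lemma exists_perm_strictMono {x : Fin n → ℝ} (hx : Function.Injective x) :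
    ∃ σ : Equiv.Perm (Fin n), StrictMono (x ∘ σ) := by
  refine ⟨Tuple.sort x, ?_⟩
  exact (Tuple.monotone_sort x).strictMono_of_injective (hx.comp (Equiv.injective _))

lemma perm_unique_strictMono {x : Fin n → ℝ} {σ τ : Equiv.Perm (Fin n)}
    (hσ : StrictMono (x ∘ σ)) (hτ : StrictMono (x ∘ τ)) : σ = τ := by
  have hinj : Function.Injective x := by
    have h1 : Function.Injective (x ∘ σ) := hσ.injective
    intro a b hab
    have := h1 (show (x ∘ σ) (σ.symm a) = (x ∘ σ) (σ.symm b) by simpa using hab)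
    simpa using congrArg σ this
  have hr : Set.range (x ∘ σ) = Set.range (x ∘ τ) := by
    rw [Set.range_comp, Set.range_comp, σ.surjective.range_eq, τ.surjective.range_eq]
  have := (hσ.range_inj hτ).mp hr
  ext i
  exact congrArg Fin.val (hinj (congrFun this i))

lemma null_not_injective :
    volume {x : Fin n → ℝ | ¬ Function.Injective x} = 0 := by
  have hsub : {x : Fin n → ℝ | ¬ Function.Injective x} ⊆
      ⋃ (p : Fin n × Fin n) (_ : p.1 ≠ p.2), {x : Fin n → ℝ | x p.1 = x p.2} := by
    intro x hx
    simp only [Set.mem_setOf_eq, Function.Injective, not_forall] at hx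
    obtain ⟨a, b, hab, hne⟩ := hx
    exact Set.mem_iUnion.mpr ⟨(a, b), Set.mem_iUnion.mpr ⟨hne, hab⟩⟩
  refine measure_mono_null hsub ?_
  refine (measure_iUnion_null fun p => ?_)
  by_cases h : p.1 = p.2
  · simp [h]
  · simpa [h] using null_eq_coords h

/-- Symmetrization over the cube. -/
lemma integral_cube_eq_factorial_mul {F : (Fin n → ℝ) → ℝ}
    (hFc : Continuous F)
    (hFs : ∀ (σ : Equiv.Perm (Fin n)) (x : Fin n → ℝ), F (x ∘ σ) = F x) :
    ∫ x in Set.univ.pi (fun _ : Fin n => Set.Icc (0:ℝ) 1), F x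
      = (n.factorial : ℝ) *
        ∫ x in (Set.univ.pi (fun _ : Fin n => Set.Icc (0:ℝ) 1)) ∩ {x | StrictMono x}, F x := by
  classical
  set cube : Set (Fin n → ℝ) := Set.univ.pi (fun _ : Fin n => Set.Icc (0:ℝ) 1) with hcube
  have hcubeM : MeasurableSet cube := MeasurableSet.univ_pi fun _ => measurableSet_Icc
  set A : Equiv.Perm (Fin n) → Set (Fin n → ℝ) :=
    fun σ => cube ∩ {x | StrictMono (x ∘ σ)} with hA
  have hAM : ∀ σ, MeasurableSet (A σ) := fun σ =>
    hcubeM.inter (measurableSet_strictMono_comp σ)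
  have hdisj : Pairwise (Function.onFun Disjoint A) := by
    intro σ τ hne
    refine Set.disjoint_left.mpr fun x hxσ hxτ => ?_
    exact hne (perm_unique_strictMono hxσ.2 hxτ.2)
  have hcover : cube =ᵐ[volume] ⋃ σ, A σ := by
    have h1 : (⋃ σ, A σ) ⊆ cube := Set.iUnion_subset fun σ => Set.inter_subset_left
    have h2 : cube \ (⋃ σ, A σ) ⊆ {x : Fin n → ℝ | ¬ Function.Injective x} := by
      intro x hx
      by_contra hinj
      simp only [Set.mem_setOf_eq, not_not] at hinj
      obtain ⟨σ, hσ⟩ := exists_perm_strictMono hinj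
      exact hx.2 (Set.mem_iUnion.mpr ⟨σ, hx.1, hσ⟩)
    refine (MeasureTheory.ae_eq_set).mpr ⟨measure_mono_null h2 null_not_injective, ?_⟩
    rw [Set.diff_eq_empty.mpr h1]
    simp
  have hcompact : IsCompact cube := isCompact_univ_pi fun _ => isCompact_Icc
  have hint : IntegrableOn F cube := hFc.continuousOn.integrableOn_compact hcompact
  have hsame : ∀ σ : Equiv.Perm (Fin n), ∫ x in A σ, F x = ∫ x in A 1, F x := by
    intro σ
    set e := MeasurableEquiv.piCongrLeft (fun _ : Fin n => ℝ) σ.symm with he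
    have hmp := MeasureTheory.volume_measurePreserving_piCongrLeft (fun _ : Fin n => ℝ) σ.symm
    have hemb : MeasurableEmbedding e := e.measurableEmbedding
    have key := hmp.setIntegral_preimage_emb hemb F (A 1)
    have hfun : ∀ x : Fin n → ℝ, e x = x ∘ σ := by
      intro x
      funext i
      simp [he, MeasurableEquiv.piCongrLeft, Equiv.piCongrLeft, Equiv.piCongrLeft']
    have hA1 : A 1 = cube ∩ {x | StrictMono x} := by
      simp only [hA, Equiv.Perm.coe_one, Function.comp_id]
    have hpre : e ⁻¹' (A 1) = A σ := by
      ext x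
      simp only [hA1, Set.mem_preimage, Set.mem_inter_iff, Set.mem_setOf_eq, hfun x, hA]
      constructor
      · rintro ⟨h1, h2⟩
        refine ⟨?_, h2⟩
        intro i _
        have := h1 (σ.symm i) (Set.mem_univ _)
        simpa using this
      · rintro ⟨h1, h2⟩
        refine ⟨?_, h2⟩
        intro i _
        exact h1 (σ i) (Set.mem_univ _)
    have hFe : ∀ x, F (e x) = F x := fun x => by rw [hfun x]; exact hFs σ x
    calc ∫ x in A σ, F x = ∫ x in e ⁻¹' (A 1), F (e x) := by
          rw [hpre]; exact Eq.symm (by simp_rw [hFe])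
    _ = ∫ y in A 1, F y := key
  have hA1 : A 1 = cube ∩ {x | StrictMono x} := by
    simp only [hA, Equiv.Perm.coe_one, Function.comp_id]
  calc ∫ x in cube, F x = ∫ x in ⋃ σ, A σ, F x :=
        MeasureTheory.setIntegral_congr_set hcover
  _ = ∑' σ : Equiv.Perm (Fin n), ∫ x in A σ, F x :=
        MeasureTheory.integral_iUnion hAM hdisj
          (hint.mono_set (Set.iUnion_subset fun σ => Set.inter_subset_left))
  _ = ∑ σ : Equiv.Perm (Fin n), ∫ x in A σ, F x := tsum_fintype _
  _ = ∑ _σ : Equiv.Perm (Fin n), ∫ x in A 1, F x := by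
        exact Finset.sum_congr rfl fun σ _ => hsame σ
  _ = (n.factorial : ℝ) * ∫ x in cube ∩ {x | StrictMono x}, F x := by
        rw [Finset.sum_const, hA1, nsmul_eq_mul, Finset.card_univ, Fintype.card_perm, Fintype.card_fin]

variable {n : ℕ}

/-- difference linear map -/
noncomputable def CLd (n : ℕ) : (Fin (n+1) → ℝ) →L[ℝ] (Fin (n+1) → ℝ) :=
  LinearMap.toContinuousLinearMap <| LinearMap.pi fun k : Fin (n+1) =>
    (LinearMap.proj k : (Fin (n+1) → ℝ) →ₗ[ℝ] ℝ) -
      (if h : (k : ℕ) = 0 then 0 else LinearMap.proj (⟨(k:ℕ) - 1, by omega⟩ : Fin (n+1)))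

lemma CLd_apply (z : Fin (n+1) → ℝ) (k : Fin (n+1)) :
    CLd n z k = z k - (if h : (k : ℕ) = 0 then 0 else z ⟨(k:ℕ) - 1, by omega⟩) := by
  simp only [CLd, LinearMap.coe_toContinuousLinearMap', LinearMap.pi_apply, LinearMap.sub_apply,
    LinearMap.proj_apply]
  by_cases h : (k : ℕ) = 0 <;> simp [h]

def Psi (n : ℕ) (y : Fin (n+1) → ℝ) : Fin (n+1) → ℝ :=
  fun k => if k = Fin.last n then y (Fin.last n) else y (Fin.last n) * y k

noncomputable def Phi (n : ℕ) (y : Fin (n+1) → ℝ) : Fin (n+1) → ℝ := CLd n (Psi n y)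

noncomputable def DPsi (n : ℕ) (y : Fin (n+1) → ℝ) : (Fin (n+1) → ℝ) →L[ℝ] (Fin (n+1) → ℝ) :=
  ContinuousLinearMap.pi fun k =>
    if k = Fin.last n then ContinuousLinearMap.proj (Fin.last n)
    else y (Fin.last n) • ContinuousLinearMap.proj k +
      y k • ContinuousLinearMap.proj (Fin.last n)

lemma hasFDerivAt_Psi (y : Fin (n+1) → ℝ) : HasFDerivAt (Psi n) (DPsi n y) y := by
  rw [hasFDerivAt_pi']
  intro k
  have hproj : (ContinuousLinearMap.proj k).comp (DPsi n y) =
      (if k = Fin.last n then ContinuousLinearMap.proj (Fin.last n)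
       else y (Fin.last n) • ContinuousLinearMap.proj k +
         y k • ContinuousLinearMap.proj (Fin.last n)) := by
    rw [DPsi]
    exact ContinuousLinearMap.proj_pi _ _
  rw [hproj]
  by_cases hk : k = Fin.last n
  · rw [if_pos hk]
    have : (fun x : Fin (n+1) → ℝ => Psi n x k) = fun x => x (Fin.last n) := by
      funext x; simp [Psi, hk]
    rw [this]
    exact hasFDerivAt_apply _ y
  · rw [if_neg hk]
    have : (fun x : Fin (n+1) → ℝ => Psi n x k) = fun x => x (Fin.last n) * x k := by
      funext x; simp [Psi, hk]
    rw [this]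
    have h1 : HasFDerivAt (𝕜 := ℝ) (fun y : Fin (n+1) → ℝ => y (Fin.last n))
        (ContinuousLinearMap.proj (Fin.last n)) y := hasFDerivAt_apply _ y
    have h2 : HasFDerivAt (𝕜 := ℝ) (fun y : Fin (n+1) → ℝ => y k)
        (ContinuousLinearMap.proj k) y := hasFDerivAt_apply _ y
    exact h1.mul h2

noncomputable def DPhi (n : ℕ) (y : Fin (n+1) → ℝ) : (Fin (n+1) → ℝ) →L[ℝ] (Fin (n+1) → ℝ) :=
  (CLd n).comp (DPsi n y)

lemma hasFDerivAt_Phi (y : Fin (n+1) → ℝ) : HasFDerivAt (Phi n) (DPhi n y) y :=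
  ((CLd n).hasFDerivAt).comp y (hasFDerivAt_Psi y)

lemma det_CLd : (CLd n).det = 1 := by
  have : (CLd n).det = LinearMap.det ((CLd n) : (Fin (n+1) → ℝ) →ₗ[ℝ] (Fin (n+1) → ℝ)) := rfl
  rw [this, ← LinearMap.det_toMatrix']
  rw [Matrix.det_of_lowerTriangular]
  · refine Finset.prod_eq_one fun i _ => ?_
    rw [LinearMap.toMatrix'_apply]
    have := CLd_apply (n := n) (fun j' => if j' = i then (1:ℝ) else 0) i
    rw [ContinuousLinearMap.coe_coe, show (Pi.single i (1:ℝ) : Fin (n+1) → ℝ) =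
      fun j' => if j' = i then 1 else 0 from by funext j'; simp [Pi.single_apply], this]
    by_cases h : (i : ℕ) = 0
    · simp [h]
    · rw [dif_neg h]
      have hne : (⟨(i:ℕ) - 1, by omega⟩ : Fin (n+1)) ≠ i := by
        intro hc
        have := congrArg Fin.val hc
        simp at this
        omega
      simp [hne]
  · intro i j hij
    rw [LinearMap.toMatrix'_apply]
    have := CLd_apply (n := n) (fun j' => if j' = j then (1:ℝ) else 0) i
    rw [ContinuousLinearMap.coe_coe, show (Pi.single j (1:ℝ) : Fin (n+1) → ℝ) =
      fun j' => if j' = j then 1 else 0 from by funext j'; simp [Pi.single_apply], this]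
    have hij' : (i : ℕ) < (j : ℕ) := hij
    have h1 : i ≠ j := Fin.ne_of_lt hij
    by_cases h : (i : ℕ) = 0
    · simp [h1, h]
    · rw [dif_neg h]
      have hne : (⟨(i:ℕ) - 1, by omega⟩ : Fin (n+1)) ≠ j := by
        intro hc
        have := congrArg Fin.val hc
        simp at this
        omega
      simp [h1, hne]

lemma det_DPsi (y : Fin (n+1) → ℝ) : (DPsi n y).det = y (Fin.last n) ^ n := by
  have : (DPsi n y).det = LinearMap.det ((DPsi n y) : (Fin (n+1) → ℝ) →ₗ[ℝ] (Fin (n+1) → ℝ)) := rfl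
  rw [this, ← LinearMap.det_toMatrix']
  have happ : ∀ (z : Fin (n+1) → ℝ) (k : Fin (n+1)), DPsi n y z k =
      if k = Fin.last n then z (Fin.last n)
      else y (Fin.last n) * z k + y k * z (Fin.last n) := by
    intro z k
    by_cases hk : k = Fin.last n <;>
      simp [DPsi, ContinuousLinearMap.pi_apply, hk, smul_eq_mul]
  rw [Matrix.det_of_upperTriangular]
  · have hdiag : ∀ i : Fin (n+1), (LinearMap.toMatrix' ((DPsi n y) :
        (Fin (n+1) → ℝ) →ₗ[ℝ] (Fin (n+1) → ℝ))) i i =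
        if i = Fin.last n then 1 else y (Fin.last n) := by
      intro i
      rw [LinearMap.toMatrix'_apply, ContinuousLinearMap.coe_coe, happ]
      by_cases hi : i = Fin.last n
      · simp [hi]
      · simp [hi, Ne.symm hi]
    calc ∏ i, (LinearMap.toMatrix' ((DPsi n y) : (Fin (n+1) → ℝ) →ₗ[ℝ] (Fin (n+1) → ℝ))) i i
        = ∏ i : Fin (n+1), (if i = Fin.last n then 1 else y (Fin.last n)) := by
          exact Finset.prod_congr rfl fun i _ => hdiag i
    _ = y (Fin.last n) ^ n := by
          rw [← Finset.prod_erase_mul _ _ (Finset.mem_univ (Fin.last n))]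
          rw [if_pos rfl, mul_one]
          rw [Finset.prod_congr rfl (fun i hi => if_neg (Finset.mem_erase.mp hi).1),
            Finset.prod_const, Finset.card_erase_of_mem (Finset.mem_univ _), Finset.card_univ,
            Fintype.card_fin, Nat.add_sub_cancel]
  · intro i j hij
    rw [LinearMap.toMatrix'_apply, ContinuousLinearMap.coe_coe, happ]
    have hij' : (j : ℕ) < (i : ℕ) := hij
    have h1 : j ≠ i := Fin.ne_of_lt hij
    have h2 : j ≠ Fin.last n := by
      intro hc
      rw [hc] at hij'
      have := i.isLt
      simp [Fin.last] at hij'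
      omega
    by_cases hi : i = Fin.last n
    · simp [hi, h2, Ne.symm h2]
    · simp [hi, Ne.symm h1, Ne.symm h2]

lemma det_DPhi (y : Fin (n+1) → ℝ) : (DPhi n y).det = y (Fin.last n) ^ n := by
  have : (DPhi n y).det = LinearMap.det (((CLd n) : (Fin (n+1) → ℝ) →ₗ[ℝ] _) ∘ₗ
      ((DPsi n y) : (Fin (n+1) → ℝ) →ₗ[ℝ] _)) := rfl
  rw [this, LinearMap.det_comp]
  have h1 : LinearMap.det ((CLd n) : (Fin (n+1) → ℝ) →ₗ[ℝ] _) = 1 := det_CLd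
  have h2 : LinearMap.det ((DPsi n y) : (Fin (n+1) → ℝ) →ₗ[ℝ] _) = y (Fin.last n) ^ n :=
    det_DPsi y
  rw [h1, h2, one_mul]

def psum (t : Fin (n+1) → ℝ) (i : ℕ) : ℝ :=
  ∑ l ∈ Finset.univ.filter (fun l : Fin (n+1) => (l:ℕ) < i), t l

lemma psum_zero (t : Fin (n+1) → ℝ) : psum t 0 = 0 := by
  simp [psum]

lemma psum_succ (t : Fin (n+1) → ℝ) {i : ℕ} (hi : i ≤ n) :
    psum t (i+1) = psum t i + t ⟨i, by omega⟩ := by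
  rw [psum, psum]
  have hset : Finset.univ.filter (fun l : Fin (n+1) => (l:ℕ) < i + 1) =
      insert (⟨i, by omega⟩ : Fin (n+1)) (Finset.univ.filter (fun l : Fin (n+1) => (l:ℕ) < i)) := by
    ext l
    simp only [Finset.mem_filter, Finset.mem_univ, true_and, Finset.mem_insert]
    constructor
    · intro h
      rcases Nat.lt_succ_iff_lt_or_eq.mp h with h | h
      · exact Or.inr h
      · exact Or.inl (Fin.ext h)
    · rintro (rfl | h)
      · simp
      · omega
  rw [hset, Finset.sum_insert (by simp)]
  ring

lemma psum_total (t : Fin (n+1) → ℝ) : psum t (n+1) = ∑ l, t l := by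
  rw [psum]
  congr 1
  ext l
  simp [l.isLt]
  have := l.isLt; omega

lemma sum_ge_eq (t : Fin (n+1) → ℝ) (i : ℕ) :
    ∑ l ∈ Finset.univ.filter (fun l : Fin (n+1) => i ≤ (l:ℕ)), t l = (∑ l, t l) - psum t i := by
  have h := Finset.sum_filter_add_sum_filter_not Finset.univ (fun l : Fin (n+1) => (l:ℕ) < i) t
  have hf : Finset.univ.filter (fun l : Fin (n+1) => ¬ (l:ℕ) < i) =
      Finset.univ.filter (fun l : Fin (n+1) => i ≤ (l:ℕ)) := by
    ext l; simp [not_lt]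
  rw [hf] at h
  rw [psum]
  linarith

lemma sum_between_eq (t : Fin (n+1) → ℝ) {i j : ℕ} (hij : i ≤ j) :
    ∑ l ∈ Finset.univ.filter (fun l : Fin (n+1) => i ≤ (l:ℕ) ∧ (l:ℕ) < j), t l
      = psum t j - psum t i := by
  have h := Finset.sum_filter_add_sum_filter_not
    (Finset.univ.filter (fun l : Fin (n+1) => (l:ℕ) < j)) (fun l : Fin (n+1) => (l:ℕ) < i) t
  rw [Finset.filter_filter, Finset.filter_filter] at h
  have h1 : Finset.univ.filter (fun l : Fin (n+1) => (l:ℕ) < j ∧ (l:ℕ) < i) =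
      Finset.univ.filter (fun l : Fin (n+1) => (l:ℕ) < i) := by
    ext l; simp only [Finset.mem_filter, Finset.mem_univ, true_and]
    constructor
    · exact fun h => h.2
    · exact fun h => ⟨lt_of_lt_of_le h hij, h⟩
  have h2 : Finset.univ.filter (fun l : Fin (n+1) => (l:ℕ) < j ∧ ¬ (l:ℕ) < i) =
      Finset.univ.filter (fun l : Fin (n+1) => i ≤ (l:ℕ) ∧ (l:ℕ) < j) := by
    ext l; simp only [Finset.mem_filter, Finset.mem_univ, true_and, not_lt]
    tauto
  rw [h1, h2] at h
  rw [psum, psum]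
  linarith

lemma psum_Phi (y : Fin (n+1) → ℝ) {i : ℕ} (hi : i ≤ n + 1) :
    psum (Phi n y) i = if h : i = 0 then 0 else Psi n y ⟨i-1, by omega⟩ := by
  induction i with
  | zero => simp [psum_zero]
  | succ i ih =>
    have hi' : i ≤ n := by omega
    rw [psum_succ _ hi', ih (by omega)]
    have happ : Phi n y ⟨i, by omega⟩ = Psi n y ⟨i, by omega⟩ -
        (if h : i = 0 then 0 else Psi n y ⟨i-1, by omega⟩) := by
      rw [Phi, CLd_apply]
    rw [happ]
    by_cases h : i = 0
    · simp [h]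
    · rw [dif_neg h, dif_neg (show ¬ i + 1 = 0 by omega)]
      have hc : (⟨i + 1 - 1, by omega⟩ : Fin (n+1)) = ⟨i, by omega⟩ := by
        apply Fin.ext; simp
      rw [hc]
      ring

lemma psum_pos {t : Fin (n+1) → ℝ} (ht : ∀ l, 0 < t l) {i : ℕ} (h1 : 1 ≤ i) :
    0 < psum t i := by
  rw [psum]
  refine Finset.sum_pos (fun l _ => ht l) ?_
  refine ⟨⟨0, by omega⟩, ?_⟩
  simp only [Finset.mem_filter, Finset.mem_univ, true_and]
  omega

lemma psum_strict {t : Fin (n+1) → ℝ} (ht : ∀ l, 0 < t l) {i j : ℕ} (hij : i < j)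
    (hj : j ≤ n + 1) : psum t i < psum t j := by
  have h := sum_between_eq t (le_of_lt hij)
  have hpos : 0 < ∑ l ∈ Finset.univ.filter
      (fun l : Fin (n+1) => i ≤ (l:ℕ) ∧ (l:ℕ) < j), t l := by
    refine Finset.sum_pos (fun l _ => ht l) ?_
    refine ⟨⟨i, by omega⟩, ?_⟩
    simp only [Finset.mem_filter, Finset.mem_univ, true_and]
    omega
  linarith

lemma CLd_injective : Function.Injective (CLd n) := by
  have hker : ∀ z : Fin (n+1) → ℝ, CLd n z = 0 → z = 0 := by
    intro z hz
    funext k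
    induction k using Fin.induction with
    | zero =>
      have := congrFun hz 0
      rw [CLd_apply] at this
      simpa using this
    | succ i ih =>
      have := congrFun hz i.succ
      rw [CLd_apply] at this
      have hne : ((i.succ : Fin (n+1)) : ℕ) ≠ 0 := by simp
      rw [dif_neg hne] at this
      have hcast : (⟨((i.succ : Fin (n+1)) : ℕ) - 1, by omega⟩ : Fin (n+1)) = i.castSucc := by
        apply Fin.ext
        simp
      rw [hcast, ih] at this
      simpa using this
  intro a b hab
  have : CLd n (a - b) = 0 := by rw [map_sub, hab, sub_self]
  have := hker _ this
  funext k
  have := congrFun this k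
  simpa [sub_eq_zero] using this

lemma Psi_last (y : Fin (n+1) → ℝ) : Psi n y (Fin.last n) = y (Fin.last n) := by
  simp [Psi]

lemma Psi_ne_last (y : Fin (n+1) → ℝ) {k : Fin (n+1)} (hk : k ≠ Fin.last n) :
    Psi n y k = y (Fin.last n) * y k := by
  simp [Psi, hk]

def regS (n : ℕ) : Set (Fin (n+1) → ℝ) :=
  {y | 0 < y (Fin.last n) ∧ (∀ j : Fin n, y j.castSucc ∈ Set.Ioo (0:ℝ) 1) ∧
    StrictMono (fun j : Fin n => y j.castSucc)}

lemma Phi_injOn : Set.InjOn (Phi n) (regS n) := by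
  intro a ha b hb hab
  have hP : Psi n a = Psi n b := CLd_injective hab
  have hlast : a (Fin.last n) = b (Fin.last n) := by
    have := congrFun hP (Fin.last n)
    simpa [Psi_last] using this
  funext k
  rcases Fin.eq_castSucc_or_eq_last k with ⟨j, rfl⟩ | rfl
  · have hne : j.castSucc ≠ Fin.last n := Fin.ne_of_lt (Fin.castSucc_lt_last j)
    have := congrFun hP j.castSucc
    rw [Psi_ne_last a hne, Psi_ne_last b hne, hlast] at this
    exact mul_left_cancel₀ (ne_of_gt (hlast ▸ ha.1)) this
  · exact hlast

lemma Phi_mem_image {y : Fin (n+1) → ℝ} (hn : 0 < n) (hy : y ∈ regS n) (k : Fin (n+1)) :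
    0 < Phi n y k := by
  obtain ⟨hT, hx, hSM⟩ := hy
  rw [Phi, CLd_apply]
  by_cases h0 : (k : ℕ) = 0
  · have hkne : k ≠ Fin.last n := by
      intro hc; rw [hc] at h0; simp [Fin.last] at h0; omega
    rw [dif_pos h0, Psi_ne_last y hkne, sub_zero]
    have hk : k = Fin.castSucc ⟨0, hn⟩ := by apply Fin.ext; simpa using h0
    rw [hk]
    exact mul_pos hT (hx ⟨0, hn⟩).1
  · rw [dif_neg h0]
    by_cases hl : k = Fin.last n
    · subst hl
      have hne : (⟨(Fin.last n : ℕ) - 1, by omega⟩ : Fin (n+1)) ≠ Fin.last n := by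
        intro hc
        have := congrArg Fin.val hc
        simp [Fin.last] at this
        omega
      rw [Psi_last, Psi_ne_last y hne]
      have hc : (⟨(Fin.last n : ℕ) - 1, by omega⟩ : Fin (n+1)) =
          Fin.castSucc ⟨n - 1, by omega⟩ := by
        apply Fin.ext; simp [Fin.last]
      rw [hc]
      have h1 : y (Fin.castSucc ⟨n - 1, by omega⟩) < 1 := (hx _).2
      nlinarith
    · have hkv : (k : ℕ) < n := by
        have := k.isLt
        have : (k : ℕ) ≠ n := fun hc => hl (Fin.ext (by simp [Fin.last, hc]))
        omega
      have hne : (⟨(k : ℕ) - 1, by omega⟩ : Fin (n+1)) ≠ Fin.last n := by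
        intro hc
        have := congrArg Fin.val hc
        simp [Fin.last] at this
        omega
      rw [Psi_ne_last y hl, Psi_ne_last y hne]
      have hk1 : k = Fin.castSucc ⟨(k : ℕ), hkv⟩ := by apply Fin.ext; simp
      have hk2 : (⟨(k : ℕ) - 1, by omega⟩ : Fin (n+1)) =
          Fin.castSucc ⟨(k : ℕ) - 1, by omega⟩ := by apply Fin.ext; simp
      have hlt : y (Fin.castSucc ⟨(k : ℕ) - 1, by omega⟩) < y (Fin.castSucc ⟨(k : ℕ), hkv⟩) := by
        apply hSM
        simp only [Fin.mk_lt_mk]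
        omega
      have e1 : y (Fin.castSucc ⟨(k : ℕ), hkv⟩) = y k := rfl
      have e2 : y (Fin.castSucc ⟨(k : ℕ) - 1, by omega⟩) = y ⟨(k : ℕ) - 1, by omega⟩ := rfl
      rw [e1, e2] at hlt
      nlinarith

lemma Phi_image (hn : 0 < n) :
    Phi n '' regS n = Set.univ.pi (fun _ : Fin (n+1) => Set.Ioi (0:ℝ)) := by
  apply Set.eq_of_subset_of_subset
  · rintro _ ⟨y, hy, rfl⟩
    intro k _
    exact Phi_mem_image hn hy k
  · intro t ht
    have ht' : ∀ l, 0 < t l := fun l => ht l (Set.mem_univ l)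
    set S : ℝ := ∑ l, t l with hS
    have hS0 : 0 < S := by
      rw [hS, ← psum_total]
      exact psum_pos ht' (by omega)
    set y : Fin (n+1) → ℝ :=
      fun k => if k = Fin.last n then S else psum t ((k : ℕ) + 1) / S with hy
    have hylast : y (Fin.last n) = S := by simp [hy]
    have hyns : ∀ k : Fin (n+1), k ≠ Fin.last n → y k = psum t ((k : ℕ) + 1) / S := by
      intro k hk; simp [hy, hk]
    have hPsi : ∀ k : Fin (n+1), Psi n y k = psum t ((k : ℕ) + 1) := by
      intro k
      by_cases hk : k = Fin.last n
      · subst hk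
        rw [Psi_last, hylast, hS, ← psum_total]
        rfl
      · rw [Psi_ne_last y hk, hylast, hyns k hk, mul_div_cancel₀ _ (ne_of_gt hS0)]
    refine ⟨y, ?_, ?_⟩
    · refine ⟨by rw [hylast]; exact hS0, ?_, ?_⟩
      · intro j
        have hne : j.castSucc ≠ Fin.last n := Fin.ne_of_lt (Fin.castSucc_lt_last j)
        rw [hyns _ hne]
        constructor
        · exact div_pos (psum_pos ht' (by omega)) hS0
        · rw [div_lt_one hS0, hS, ← psum_total]
          exact psum_strict ht' (by simp only [Fin.coe_castSucc]; omega) (by omega)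
      · intro j j' hjj
        have hnej : j.castSucc ≠ Fin.last n := Fin.ne_of_lt (Fin.castSucc_lt_last j)
        have hnej' : j'.castSucc ≠ Fin.last n := Fin.ne_of_lt (Fin.castSucc_lt_last j')
        simp only [hyns _ hnej, hyns _ hnej']
        have hjj' : (j : ℕ) < (j' : ℕ) := hjj
        have hps : psum t ((j.castSucc : ℕ) + 1) < psum t ((j'.castSucc : ℕ) + 1) :=
          psum_strict ht' (by simp only [Fin.coe_castSucc]; omega)
            (by simp only [Fin.coe_castSucc]; omega)
        gcongr
    · funext k
      rw [Phi, CLd_apply, hPsi k]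
      by_cases h0 : (k : ℕ) = 0
      · rw [dif_pos h0, sub_zero]
        have : psum t ((k : ℕ) + 1) = psum t (k : ℕ) + t k := by
          rw [psum_succ t (by omega)]
        rw [this, h0, psum_zero]
        ring
      · rw [dif_neg h0, hPsi]
        have hv : ((⟨(k : ℕ) - 1, by omega⟩ : Fin (n+1)) : ℕ) + 1 = (k : ℕ) := by
          simp; omega
        rw [hv]
        have : psum t ((k : ℕ) + 1) = psum t (k : ℕ) + t k := by
          rw [psum_succ t (by omega)]
        rw [this]
        ring

lemma card_pairs (n : ℕ) :
    ((Finset.Icc 1 n ×ˢ Finset.Icc 1 n).filter (fun p : ℕ × ℕ => p.1 < p.2)).card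
      = n * (n - 1) / 2 := by
  classical
  rw [Finset.card_eq_sum_card_fiberwise
    (f := fun p : ℕ × ℕ => p.2) (t := Finset.Icc 1 n)
    (by intro p hp; simp only [Finset.coe_filter, Finset.mem_coe, Finset.mem_filter, Finset.mem_product, Set.mem_setOf_eq] at hp; exact hp.1.2)]
  have hfib : ∀ b ∈ Finset.Icc 1 n,
      (((Finset.Icc 1 n ×ˢ Finset.Icc 1 n).filter (fun p : ℕ × ℕ => p.1 < p.2)).filter
        (fun p => p.2 = b)).card = b - 1 := by
    intro b hb
    simp only [Finset.mem_Icc] at hb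
    have : (((Finset.Icc 1 n ×ˢ Finset.Icc 1 n).filter (fun p : ℕ × ℕ => p.1 < p.2)).filter
        (fun p => p.2 = b)) = (Finset.Icc 1 (b-1)).image (fun a => (a, b)) := by
      ext p
      simp only [Finset.mem_filter, Finset.mem_product, Finset.mem_Icc, Finset.mem_image]
      constructor
      · rintro ⟨⟨⟨h1, h2⟩, h3⟩, h4⟩
        exact ⟨p.1, ⟨h1.1, by omega⟩, by rw [← h4]⟩
      · rintro ⟨a, ⟨ha1, ha2⟩, rfl⟩
        refine ⟨⟨⟨⟨ha1, by omega⟩, ⟨by omega, by omega⟩⟩, by simp; omega⟩, rfl⟩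
    rw [this, Finset.card_image_of_injective _ (fun a b hab => (Prod.mk.injEq _ _ _ _ ▸ hab).1)]
    simp
  rw [Finset.sum_congr rfl hfib]
  have : ∑ b ∈ Finset.Icc 1 n, (b - 1) = ∑ j ∈ Finset.range n, j := by
    refine Finset.sum_nbij' (fun b => b - 1) (fun j => j + 1) ?_ ?_ ?_ ?_ ?_ <;>
      intro a ha <;> simp only [Finset.mem_Icc, Finset.mem_range] at ha ⊢ <;> omega
  rw [this, Finset.sum_range_id]

lemma gamma_int (K : ℕ) :
    ∫ T in Set.Ioi (0:ℝ), T ^ K * Real.exp (-T) = (K.factorial : ℝ) := by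
  have h1 := Real.Gamma_eq_integral (show (0:ℝ) < K + 1 by positivity)
  have h2 : Real.Gamma ((K : ℝ) + 1) = K.factorial := Real.Gamma_nat_eq_factorial K
  rw [h2] at h1
  calc ∫ T in Set.Ioi (0:ℝ), T ^ K * Real.exp (-T)
      = ∫ T in Set.Ioi (0:ℝ), Real.exp (-T) * T ^ ((K : ℝ) + 1 - 1) := by
        refine MeasureTheory.setIntegral_congr_fun measurableSet_Ioi fun x hx => ?_
        rw [show ((K : ℝ) + 1 - 1) = (K : ℝ) by ring, Real.rpow_natCast]
        ring
  _ = (K.factorial : ℝ) := h1.symm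
noncomputable def fLHS (n r s m : ℕ) (t : Fin (n+1) → ℝ) : ℝ :=
  ((∏ i ∈ Finset.Icc 1 n,
      (∑ l ∈ Finset.univ.filter (fun l : Fin (n + 1) => l.val < i), t l) ^ r *
      (∑ l ∈ Finset.univ.filter (fun l : Fin (n + 1) => i ≤ l.val), t l) ^ s) *
    ∏ p ∈ (Finset.Icc 1 n ×ˢ Finset.Icc 1 n).filter (fun p => p.1 < p.2),
      (∑ l ∈ Finset.univ.filter (fun l : Fin (n + 1) => p.1 ≤ l.val ∧ l.val < p.2), t l) ^ m) *
    Real.exp (-(∑ l, t l))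

lemma integrand_Phi (hn : 0 < n) (r s m : ℕ) {y : Fin (n+1) → ℝ} (hy : y ∈ regS n) :
    fLHS n r s m (Phi n y) =
      y (Fin.last n) ^ ((r + s) * n + m * (n * (n - 1) / 2)) * Real.exp (-(y (Fin.last n))) *
        Fint r s m (fun j : Fin n => y j.castSucc) := by
  obtain ⟨hT, hx, hSM⟩ := hy
  set T := y (Fin.last n) with hTdef
  set x : Fin n → ℝ := fun j => y j.castSucc with hxdef
  set X : ℕ → ℝ := fun i => if h : i < n then x ⟨i, h⟩ else 0 with hXdef
  have hpsum : ∀ i : ℕ, 1 ≤ i → i ≤ n → psum (Phi n y) i = T * X (i - 1) := by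
    intro i h1 h2
    rw [psum_Phi y (by omega), dif_neg (by omega)]
    have hne : (⟨i - 1, by omega⟩ : Fin (n+1)) ≠ Fin.last n := by
      intro hc
      have := congrArg Fin.val hc
      simp [Fin.last] at this
      omega
    rw [Psi_ne_last y hne]
    simp only [hXdef]
    rw [dif_pos (show i - 1 < n by omega)]
    rfl
  have htot : ∑ l, Phi n y l = T := by
    rw [← psum_total, psum_Phi y (le_refl (n+1)), dif_neg (by omega)]
    have : (⟨n + 1 - 1, by omega⟩ : Fin (n+1)) = Fin.last n := by
      apply Fin.ext; simp [Fin.last]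
    rw [this, Psi_last]
  have hsum1 : ∀ i : ℕ, 1 ≤ i → i ≤ n →
      ∑ l ∈ Finset.univ.filter (fun l : Fin (n + 1) => l.val < i), Phi n y l = T * X (i-1) :=
    fun i h1 h2 => hpsum i h1 h2
  have hsum2 : ∀ i : ℕ, 1 ≤ i → i ≤ n →
      ∑ l ∈ Finset.univ.filter (fun l : Fin (n + 1) => i ≤ l.val), Phi n y l
        = T * (1 - X (i-1)) := by
    intro i h1 h2
    rw [sum_ge_eq, htot, hpsum i h1 h2]
    ring
  have hsum3 : ∀ i j : ℕ, 1 ≤ i → i < j → j ≤ n →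
      ∑ l ∈ Finset.univ.filter (fun l : Fin (n + 1) => i ≤ l.val ∧ l.val < j), Phi n y l
        = T * (X (j-1) - X (i-1)) := by
    intro i j h1 h2 h3
    rw [sum_between_eq _ (le_of_lt h2), hpsum i h1 (by omega), hpsum j (by omega) h3]
    ring
  rw [fLHS, htot]
  have hA : (∏ i ∈ Finset.Icc 1 n,
      (∑ l ∈ Finset.univ.filter (fun l : Fin (n + 1) => l.val < i), Phi n y l) ^ r *
      (∑ l ∈ Finset.univ.filter (fun l : Fin (n + 1) => i ≤ l.val), Phi n y l) ^ s)
      = T ^ ((r + s) * n) * ∏ j : Fin n, x j ^ r * (1 - x j) ^ s := by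
    have step1 : ∀ i ∈ Finset.Icc 1 n,
        (∑ l ∈ Finset.univ.filter (fun l : Fin (n + 1) => l.val < i), Phi n y l) ^ r *
        (∑ l ∈ Finset.univ.filter (fun l : Fin (n + 1) => i ≤ l.val), Phi n y l) ^ s
        = T ^ (r + s) * (X (i-1) ^ r * (1 - X (i-1)) ^ s) := by
      intro i hi
      simp only [Finset.mem_Icc] at hi
      rw [hsum1 i hi.1 hi.2, hsum2 i hi.1 hi.2, mul_pow, mul_pow, pow_add]
      ring
    rw [Finset.prod_congr rfl step1, Finset.prod_mul_distrib, Finset.prod_const,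
      Nat.card_Icc, ← pow_mul, show n + 1 - 1 = n from rfl]
    congr 1
    · refine Finset.prod_bij' (fun a ha => (⟨a - 1, by simp only [Finset.mem_Icc] at ha; omega⟩ : Fin n))
        (fun b _ => (b : ℕ) + 1) ?_ ?_ ?_ ?_ ?_
      · intro a ha; exact Finset.mem_univ _
      · intro b _; simp only [Finset.mem_Icc]; omega
      · intro a ha; simp only [Finset.mem_Icc] at ha; dsimp only; omega
      · intro b _; apply Fin.ext; simp
      · intro a ha
        simp only [Finset.mem_Icc] at ha
        simp only [hXdef]
        rw [dif_pos (show a - 1 < n by omega)]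
  have hB : (∏ p ∈ (Finset.Icc 1 n ×ˢ Finset.Icc 1 n).filter (fun p => p.1 < p.2),
      (∑ l ∈ Finset.univ.filter (fun l : Fin (n + 1) => p.1 ≤ l.val ∧ l.val < p.2),
        Phi n y l) ^ m)
      = T ^ (m * (n * (n - 1) / 2)) *
        ∏ p ∈ Finset.univ.filter (fun p : Fin n × Fin n => p.1 < p.2), |x p.1 - x p.2| ^ m := by
    have step1 : ∀ p ∈ (Finset.Icc 1 n ×ˢ Finset.Icc 1 n).filter (fun p : ℕ × ℕ => p.1 < p.2),
        (∑ l ∈ Finset.univ.filter (fun l : Fin (n + 1) => p.1 ≤ l.val ∧ l.val < p.2),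
          Phi n y l) ^ m
        = T ^ m * (X (p.2 - 1) - X (p.1 - 1)) ^ m := by
      intro p hp
      simp only [Finset.mem_filter, Finset.mem_product, Finset.mem_Icc] at hp
      rw [hsum3 p.1 p.2 hp.1.1.1 hp.2 hp.1.2.2, mul_pow]
    rw [Finset.prod_congr rfl step1, Finset.prod_mul_distrib, Finset.prod_const, card_pairs,
      ← pow_mul]
    congr 1
    refine Finset.prod_bij' (fun p hp =>
        ((⟨p.1 - 1, by simp only [Finset.mem_filter, Finset.mem_product, Finset.mem_Icc] at hp; omega⟩ : Fin n),
         (⟨p.2 - 1, by simp only [Finset.mem_filter, Finset.mem_product, Finset.mem_Icc] at hp; omega⟩ : Fin n)))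
      (fun q _ => ((q.1 : ℕ) + 1, (q.2 : ℕ) + 1)) ?_ ?_ ?_ ?_ ?_
    · intro p hp
      simp only [Finset.mem_filter, Finset.mem_product, Finset.mem_Icc] at hp ⊢
      refine ⟨Finset.mem_univ _, ?_⟩
      simp only [Fin.mk_lt_mk]
      omega
    · intro q hq
      simp only [Finset.mem_filter, Finset.mem_univ, true_and] at hq
      simp only [Finset.mem_filter, Finset.mem_product, Finset.mem_Icc]
      have h1 := q.1.isLt
      have h2 := q.2.isLt
      have h3 : (q.1 : ℕ) < (q.2 : ℕ) := hq
      omega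
    · intro p hp
      simp only [Finset.mem_filter, Finset.mem_product, Finset.mem_Icc] at hp
      have := hp.1.1.1
      have := hp.1.2.1
      ext <;> simp <;> omega
    · intro q hq
      ext <;> simp
    · intro p hp
      simp only [Finset.mem_filter, Finset.mem_product, Finset.mem_Icc] at hp
      dsimp only
      simp only [hXdef]
      rw [dif_pos (show p.2 - 1 < n by omega), dif_pos (show p.1 - 1 < n by omega)]
      have hlt : x ⟨p.1 - 1, by omega⟩ < x ⟨p.2 - 1, by omega⟩ := by
        apply hSM
        simp only [Fin.mk_lt_mk]
        omega
      rw [abs_sub_comm, abs_of_pos (sub_pos.mpr hlt)]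
  rw [hA, hB, Fint]
  rw [pow_add]
  ring

lemma measurableSet_strictMono' : MeasurableSet {x : Fin n → ℝ | StrictMono x} := by
  have h := measurableSet_strictMono_comp (n := n) 1
  simpa [Function.comp] using h

lemma measurableSet_regS : MeasurableSet (regS n) := by
  have h1 : MeasurableSet {y : Fin (n+1) → ℝ | 0 < y (Fin.last n)} :=
    measurableSet_lt measurable_const (measurable_pi_apply _)
  have h2 : MeasurableSet {y : Fin (n+1) → ℝ | ∀ j : Fin n, y j.castSucc ∈ Set.Ioo (0:ℝ) 1} := by
    have : {y : Fin (n+1) → ℝ | ∀ j : Fin n, y j.castSucc ∈ Set.Ioo (0:ℝ) 1} =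
        ⋂ j : Fin n, (fun y : Fin (n+1) → ℝ => y j.castSucc) ⁻¹' Set.Ioo 0 1 := by
      ext y; simp
    rw [this]
    exact MeasurableSet.iInter fun j => (measurable_pi_apply _) measurableSet_Ioo
  have h3 : MeasurableSet {y : Fin (n+1) → ℝ | StrictMono (fun j : Fin n => y j.castSucc)} := by
    have : {y : Fin (n+1) → ℝ | StrictMono (fun j : Fin n => y j.castSucc)} =
        ⋂ (p : Fin n × Fin n), ⋂ (_ : p.1 < p.2),
          {y : Fin (n+1) → ℝ | y p.1.castSucc < y p.2.castSucc} := by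
      ext y
      simp only [Set.mem_setOf_eq, Set.mem_iInter]
      constructor
      · intro hy p hp; exact hy hp
      · intro hy a b hab; exact hy (a, b) hab
    rw [this]
    exact MeasurableSet.iInter fun p => MeasurableSet.iInter fun _ =>
      measurableSet_lt (measurable_pi_apply _) (measurable_pi_apply _)
  exact h1.inter (h2.inter h3)

end SelbergAux

theorem selberg_integral_alternative_expression (n r s m : ℕ) (hn : 0 < n) :
    (∫ t in Set.univ.pi (fun _ : Fin (n + 1) => Set.Ici (0 : ℝ)),
      ((∏ i ∈ Finset.Icc 1 n,
          (∑ l ∈ Finset.univ.filter (fun l : Fin (n + 1) => l.val < i), t l) ^ r *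
          (∑ l ∈ Finset.univ.filter (fun l : Fin (n + 1) => i ≤ l.val), t l) ^ s) *
        ∏ p ∈ (Finset.Icc 1 n ×ˢ Finset.Icc 1 n).filter (fun p => p.1 < p.2),
          (∑ l ∈ Finset.univ.filter (fun l : Fin (n + 1) => p.1 ≤ l.val ∧ l.val < p.2),
            t l) ^ m) *
        Real.exp (-(∑ l, t l)))
    = ((((r + s + 1) * n + m * (n * (n - 1) / 2)).factorial : ℝ) / (n.factorial : ℝ)) *
      ∫ x in Set.univ.pi (fun _ : Fin n => Set.Icc (0 : ℝ) 1),
        (∏ i, x i ^ r * (1 - x i) ^ s) *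
          ∏ p ∈ Finset.univ.filter (fun p : Fin n × Fin n => p.1 < p.2),
            |x p.1 - x p.2| ^ m := by
  classical
  set K : ℕ := (r + s + 1) * n + m * (n * (n - 1) / 2) with hK
  have hLfun : (∫ t in Set.univ.pi (fun _ : Fin (n + 1) => Set.Ici (0 : ℝ)),
      ((∏ i ∈ Finset.Icc 1 n,
          (∑ l ∈ Finset.univ.filter (fun l : Fin (n + 1) => l.val < i), t l) ^ r *
          (∑ l ∈ Finset.univ.filter (fun l : Fin (n + 1) => i ≤ l.val), t l) ^ s) *
        ∏ p ∈ (Finset.Icc 1 n ×ˢ Finset.Icc 1 n).filter (fun p => p.1 < p.2),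
          (∑ l ∈ Finset.univ.filter (fun l : Fin (n + 1) => p.1 ≤ l.val ∧ l.val < p.2),
            t l) ^ m) *
        Real.exp (-(∑ l, t l)))
      = ∫ t in Set.univ.pi (fun _ : Fin (n + 1) => Set.Ici (0 : ℝ)), fLHS n r s m t := rfl
  rw [hLfun]
  -- right-hand integrand is Fint
  have hRfun : (∫ x in Set.univ.pi (fun _ : Fin n => Set.Icc (0 : ℝ) 1),
      (∏ i, x i ^ r * (1 - x i) ^ s) *
        ∏ p ∈ Finset.univ.filter (fun p : Fin n × Fin n => p.1 < p.2),
          |x p.1 - x p.2| ^ m)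
      = ∫ x in Set.univ.pi (fun _ : Fin n => Set.Icc (0 : ℝ) 1), Fint r s m x := rfl
  rw [hRfun]
  -- Step 1: replace Ici by Ioi
  have hstep1 : (∫ t in Set.univ.pi (fun _ : Fin (n + 1) => Set.Ici (0 : ℝ)), fLHS n r s m t)
      = ∫ t in Set.univ.pi (fun _ : Fin (n + 1) => Set.Ioi (0 : ℝ)), fLHS n r s m t := by
    refine MeasureTheory.setIntegral_congr_set ?_
    refine (MeasureTheory.ae_eq_set).mpr ⟨?_, ?_⟩
    · refine measure_mono_null ?_
        (measure_iUnion_null (s := fun k : Fin (n+1) => {t : Fin (n+1) → ℝ | t k = 0})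
          fun k => null_const_coord 0)
      intro t ht
      simp only [Set.mem_diff, Set.mem_pi, Set.mem_univ, forall_true_left, true_implies,
        Set.mem_Ici, Set.mem_Ioi, not_forall] at ht
      obtain ⟨h1, k, hk⟩ := ht
      have h2 : (0:ℝ) ≤ t k := h1 k
      refine Set.mem_iUnion.mpr ⟨k, ?_⟩
      simp only [Set.mem_setOf_eq]
      have hk' : ¬ (0 : ℝ) < t k := by
        intro hc; exact hk (by simpa using hc)
      linarith
    · have hsub : Set.univ.pi (fun _ : Fin (n + 1) => Set.Ioi (0 : ℝ)) ⊆
          Set.univ.pi (fun _ : Fin (n + 1) => Set.Ici (0 : ℝ)) :=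
        Set.pi_mono fun i _ => Set.Ioi_subset_Ici_self
      rw [Set.diff_eq_empty.mpr hsub]
      simp
  rw [hstep1, ← Phi_image hn]
  have hderiv : ∀ y ∈ regS n, HasFDerivWithinAt (Phi n) (DPhi n y) (regS n) y :=
    fun y _ => (hasFDerivAt_Phi y).hasFDerivWithinAt
  rw [MeasureTheory.integral_image_eq_integral_abs_det_fderiv_smul volume measurableSet_regS
    hderiv Phi_injOn (fLHS n r s m)]
  -- pointwise rewrite on regS
  set e := MeasurableEquiv.piFinSuccAbove (fun _ : Fin (n+1) => ℝ) (Fin.last n) with he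
  set Dlt : Set (Fin n → ℝ) :=
    (Set.univ.pi fun _ : Fin n => Set.Ioo (0:ℝ) 1) ∩ {x | StrictMono x} with hDlt
  set gK : ℝ × (Fin n → ℝ) → ℝ :=
    fun q => (q.1 ^ K * Real.exp (-q.1)) * Fint r s m q.2 with hgK
  have happ : ∀ y : Fin (n+1) → ℝ, e y = (y (Fin.last n), fun j : Fin n => y j.castSucc) := by
    intro y
    rw [he]
    ext
    · rfl
    · simp [MeasurableEquiv.piFinSuccAbove, Fin.init]
  have hstep2 : (∫ y in regS n, |(DPhi n y).det| • fLHS n r s m (Phi n y))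
      = ∫ y in regS n, gK (e y) := by
    refine MeasureTheory.setIntegral_congr_fun measurableSet_regS fun y hy => ?_
    have hT : 0 < y (Fin.last n) := hy.1
    rw [det_DPhi, integrand_Phi hn r s m hy, abs_of_nonneg (pow_nonneg hT.le n)]
    rw [happ y, hgK]
    simp only [smul_eq_mul]
    rw [show K = n + ((r + s) * n + m * (n * (n - 1) / 2)) by rw [hK]; ring, pow_add]
    ring
  rw [hstep2]
  have hpre : regS n = e ⁻¹' (Set.Ioi (0:ℝ) ×ˢ Dlt) := by
    ext y
    simp only [Set.mem_preimage, happ y, Set.mem_prod, Set.mem_Ioi, hDlt, Set.mem_inter_iff,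
      Set.mem_pi, Set.mem_univ, true_implies, Set.mem_setOf_eq, regS]
  have hstep3 : (∫ y in regS n, gK (e y)) = ∫ q in Set.Ioi (0:ℝ) ×ˢ Dlt, gK q := by
    rw [hpre]
    exact (MeasureTheory.volume_preserving_piFinSuccAbove (fun _ : Fin (n+1) => ℝ)
      (Fin.last n)).setIntegral_preimage_emb e.measurableEmbedding gK _
  rw [hstep3, hgK]
  rw [MeasureTheory.Measure.volume_eq_prod]
  rw [MeasureTheory.setIntegral_prod_mul (fun T : ℝ => T ^ K * Real.exp (-T))
    (fun x => Fint r s m x) (Set.Ioi 0) Dlt]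
  rw [gamma_int K]
  -- relate Dlt integral to cube ∩ strictMono
  have hstep4 : (∫ x in Dlt, Fint r s m x)
      = ∫ x in (Set.univ.pi fun _ : Fin n => Set.Icc (0:ℝ) 1) ∩ {x | StrictMono x},
          Fint r s m x := by
    refine MeasureTheory.setIntegral_congr_set ?_
    refine (MeasureTheory.ae_eq_set).mpr ⟨?_, ?_⟩
    · have hsub : Dlt ⊆ (Set.univ.pi fun _ : Fin n => Set.Icc (0:ℝ) 1) ∩ {x | StrictMono x} := by
        refine Set.inter_subset_inter ?_ (subset_refl _)
        exact Set.pi_mono fun i _ => Set.Ioo_subset_Icc_self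
      rw [Set.diff_eq_empty.mpr hsub]
      simp
    · refine measure_mono_null ?_
        (measure_iUnion_null
          (s := fun j : Fin n => ({x : Fin n → ℝ | x j = 0} ∪ {x : Fin n → ℝ | x j = 1}))
          fun j => measure_union_null (null_const_coord 0) (null_const_coord 1))
      intro x hx
      obtain ⟨⟨hxc, hsm⟩, hxn⟩ := hx
      rw [hDlt] at hxn
      simp only [Set.mem_inter_iff, Set.mem_pi, Set.mem_univ, true_implies, not_and_or,
        not_forall] at hxn
      rcases hxn with ⟨j, hj⟩ | hns
      · have hj' := hxc j (Set.mem_univ j)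
        simp only [Set.mem_Icc] at hj'
        simp only [Set.mem_Ioo, not_and_or, not_lt] at hj
        refine Set.mem_iUnion.mpr ⟨j, ?_⟩
        rcases hj with h | h
        · exact Or.inl (le_antisymm h hj'.1)
        · exact Or.inr (le_antisymm hj'.2 h)
      · exact absurd hsm hns
  rw [hstep4]
  have hsymm := integral_cube_eq_factorial_mul (n := n) (F := Fint r s m)
    Fint_continuous (fun σ x => Fint_comp_perm σ x)
  rw [hsymm]
  have hnfac : (n.factorial : ℝ) ≠ 0 := Nat.cast_ne_zero.mpr (Nat.factorial_ne_zero n)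
  field_simp
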